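/- The function E_0(t) = Σ_{n=1}^∞ (4π²n⁴e^{4t} − 6πn²e^{2t}) e^{−πn²e^{2t}} e^{t/2} is strictly decreasing on (0, ∞). -/

import Mathlib

open Real

namespace E0aux

/-- the summand of `E₀` -/
noncomputable def tm (n : ℕ+) (t : ℝ) : ℝ :=
  (4 * π ^ 2 * (n : ℝ) ^ 4 * Real.exp (4 * t)
          - 6 * π * (n : ℝ) ^ 2 * Real.exp (2 * t))
        * Real.exp (-(π * (n : ℝ) ^ 2 * Real.exp (2 * t))) * Real.exp (t / 2)

noncomputable def ot (n : ℕ+) (t : ℝ) : ℝ := Real.exp (-(π * (n:ℝ)^2 * Real.exp (2*t)))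
noncomputable def o1t (n : ℕ+) (t : ℝ) : ℝ := -(2*π*(n:ℝ)^2*Real.exp (2*t)) * ot n t
noncomputable def o2t (n : ℕ+) (t : ℝ) : ℝ :=
  (4*(π*(n:ℝ)^2*Real.exp (2*t))^2 - 4*(π*(n:ℝ)^2*Real.exp (2*t))) * ot n t
noncomputable def ga (n : ℕ+) (y : ℝ) : ℝ :=
  (n:ℝ)^2 * Real.exp (-((n:ℝ)^2*y)) * (-4*(n:ℝ)^4*y^2 + 15*(n:ℝ)^2*y - 15/2)
noncomputable def dtm (n : ℕ+) (t : ℝ) : ℝ :=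
  2*π*Real.exp (2*t)*Real.exp (t/2) * ga n (π*Real.exp (2*t))
noncomputable def daf (n : ℕ+) (y : ℝ) : ℝ :=
  (n:ℝ)^4 * Real.exp (-((n:ℝ)^2*y)) * (4*(n:ℝ)^4*y^2 - 23*(n:ℝ)^2*y + 45/2)

noncomputable def WW (t : ℝ) : ℝ := ∑' n : ℕ+, ot n t
noncomputable def WW1 (t : ℝ) : ℝ := ∑' n : ℕ+, o1t n t
noncomputable def WW2 (t : ℝ) : ℝ := ∑' n : ℕ+, o2t n t
noncomputable def PhiE (t : ℝ) : ℝ := ∑' n : ℕ+, tm n t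
noncomputable def Phi1E (t : ℝ) : ℝ := ∑' n : ℕ+, dtm n t
noncomputable def AA (y : ℝ) : ℝ := ∑' n : ℕ+, ga n y
noncomputable def AA1 (y : ℝ) : ℝ := ∑' n : ℕ+, daf n y
noncomputable def Lam (t : ℝ) : ℝ := Real.exp (t/2) * (1 + 2 * WW t)
noncomputable def Lam1 (t : ℝ) : ℝ := Real.exp (t/2) * ((1 + 2 * WW t)/2 + 2 * WW1 t)
noncomputable def Lam2 (t : ℝ) : ℝ :=
  Real.exp (t/2) * ((1 + 2 * WW t)/4 + 2 * WW1 t + 2 * WW2 t)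

/-! ### Summability masters -/

lemma mastN (k : ℕ) {c : ℝ} (hc : 0 < c) :
    Summable (fun n : ℕ => (n:ℝ)^k * Real.exp (-(c*(n:ℝ)^2))) := by
  have hr0 : (0:ℝ) ≤ Real.exp (-c) := (Real.exp_pos _).le
  have hr1 : Real.exp (-c) < 1 := by
    rw [Real.exp_lt_one_iff]; linarith
  apply Summable.of_nonneg_of_le
    (f := fun n : ℕ => Real.exp ((c+k)^2/(4*c)) * (Real.exp (-c))^n)
  · intro n; positivity
  · intro n
    have hlog : (n:ℝ)^k ≤ Real.exp (k*(n-1)) := by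
      rcases Nat.eq_zero_or_pos n with h0 | h0
      · subst h0; rcases Nat.eq_zero_or_pos k with h1 | h1
        · simp [h1]
        · simp [zero_pow h1.ne']; positivity
      · have hn : (0:ℝ) < n := by exact_mod_cast h0
        have : Real.log ((n:ℝ)^k) ≤ k*(n-1) := by
          rw [Real.log_pow]
          have := Real.log_le_sub_one_of_pos hn
          calc (k:ℝ) * Real.log n ≤ k * ((n:ℝ)-1) := by
                apply mul_le_mul_of_nonneg_left this (by positivity)
            _ = k*((n:ℝ)-1) := rfl
        calc (n:ℝ)^k = Real.exp (Real.log ((n:ℝ)^k)) := by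
              rw [Real.exp_log (by positivity)]
          _ ≤ Real.exp (k*(n-1)) := Real.exp_le_exp.2 this
    calc (n:ℝ)^k * Real.exp (-(c*(n:ℝ)^2))
        ≤ Real.exp (k*(n-1)) * Real.exp (-(c*(n:ℝ)^2)) := by
          apply mul_le_mul_of_nonneg_right hlog (Real.exp_pos _).le
      _ = Real.exp (k*(n-1) - c*(n:ℝ)^2) := by rw [← Real.exp_add]; ring_nf
      _ ≤ Real.exp ((c+k)^2/(4*c) - c*n) := by
          apply Real.exp_le_exp.2
          have h4c : (0:ℝ) < 4*c := by positivity
          rw [← mul_le_mul_iff_right₀ h4c]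
          have he : 4*c*((c+k)^2/(4*c) - c*(n:ℝ)) = (c+k)^2 - 4*c^2*(n:ℝ) := by
            field_simp
          rw [he]
          nlinarith [sq_nonneg (2*c*(n:ℝ) - (c+k)), mul_nonneg hc.le (Nat.cast_nonneg k)]
      _ = Real.exp ((c+k)^2/(4*c)) * (Real.exp (-c))^n := by
          rw [← Real.exp_nat_mul, ← Real.exp_add]; ring_nf
  · exact (summable_geometric_of_lt_one hr0 hr1).mul_left _

lemma mastP (k : ℕ) {c : ℝ} (hc : 0 < c) :
    Summable (fun n : ℕ+ => (n:ℝ)^k * Real.exp (-(c*(n:ℝ)^2))) :=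
  (mastN k hc).comp_injective PNat.coe_injective

lemma mastP0 {c : ℝ} (hc : 0 < c) :
    Summable (fun n : ℕ+ => Real.exp (-(c*(n:ℝ)^2))) := by
  simpa using mastP 0 hc

/-! ### numeric exp bounds -/

lemma exp2_le : Real.exp 2 ≤ 7.39 := by
  have h : Real.exp 2 = Real.exp 1 ^ 2 := by
    rw [← Real.exp_nat_mul]; norm_num
  rw [h]
  nlinarith [Real.exp_one_lt_d9.le, Real.exp_pos 1]

lemma exp2_ge : (7.389:ℝ) ≤ Real.exp 2 := by
  have h : Real.exp 2 = Real.exp 1 ^ 2 := by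
    rw [← Real.exp_nat_mul]; norm_num
  rw [h]
  nlinarith [Real.exp_one_gt_d9.le, Real.exp_pos 1]

lemma expm2_ge : (0.135:ℝ) ≤ Real.exp (-2) := by
  rw [Real.exp_neg, le_inv_comm₀ (by norm_num) (Real.exp_pos _)]
  calc Real.exp 2 ≤ 7.39 := exp2_le
      _ ≤ 0.135⁻¹ := by norm_num

lemma exp32_le : Real.exp 3.2 ≤ 24.6 := by
  have h5 : Real.exp 3.2 ^ (5:ℕ) = Real.exp 1 ^ (16:ℕ) := by
    rw [← Real.exp_nat_mul, ← Real.exp_nat_mul]; norm_num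
  have h : Real.exp 3.2 ^ (5:ℕ) ≤ 24.6 ^ (5:ℕ) := by
    rw [h5]
    calc Real.exp 1 ^ (16:ℕ) ≤ 2.7182818286 ^ (16:ℕ) := by
          apply pow_le_pow_left₀ (Real.exp_pos 1).le Real.exp_one_lt_d9.le
      _ ≤ 24.6 ^ (5:ℕ) := by norm_num
  exact le_of_pow_le_pow_left₀ (by norm_num) (by norm_num) h

lemma expm32_ge : (0.0406:ℝ) ≤ Real.exp (-3.2) := by
  rw [Real.exp_neg, le_inv_comm₀ (by norm_num) (Real.exp_pos _)]
  calc Real.exp 3.2 ≤ 24.6 := exp32_le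
    _ ≤ 0.0406⁻¹ := by norm_num

lemma exp105_ge : (33000:ℝ) ≤ Real.exp 10.5 := by
  have h5 : Real.exp 10.5 ^ (2:ℕ) = Real.exp 1 ^ (21:ℕ) := by
    rw [← Real.exp_nat_mul, ← Real.exp_nat_mul]; norm_num
  have h : (33000:ℝ) ^ (2:ℕ) ≤ Real.exp 10.5 ^ (2:ℕ) := by
    rw [h5]
    calc (33000:ℝ)^(2:ℕ) ≤ 2.7182818283 ^ (21:ℕ) := by norm_num
      _ ≤ Real.exp 1 ^ (21:ℕ) := by
          apply pow_le_pow_left₀ (by norm_num) Real.exp_one_gt_d9.le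
  exact le_of_pow_le_pow_left₀ (by norm_num) (Real.exp_pos _).le h

lemma exp25_ge : (776385:ℝ) ≤ Real.exp 25 := by
  have h : Real.exp 25 = Real.exp 1 ^ (25:ℕ) := by
    rw [← Real.exp_nat_mul]; norm_num
  rw [h]
  calc (776385:ℝ) ≤ 2.7182818283 ^ (25:ℕ) := by norm_num
    _ ≤ Real.exp 1 ^ (25:ℕ) := pow_le_pow_left₀ (by norm_num) Real.exp_one_gt_d9.le _

lemma exp5_ge : (118.4:ℝ) ≤ Real.exp 5 := by
  have h : Real.exp 5 = Real.exp 1 ^ (5:ℕ) := by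
    rw [← Real.exp_nat_mul]; norm_num
  rw [h]
  calc (118.4:ℝ) ≤ 2.7182818283 ^ (5:ℕ) := by norm_num
    _ ≤ Real.exp 1 ^ (5:ℕ) := pow_le_pow_left₀ (by norm_num) Real.exp_one_gt_d9.le _

lemma expm1_le : Real.exp (-1) ≤ 0.368 := by
  rw [Real.exp_neg, inv_le_comm₀ (Real.exp_pos _) (by norm_num)]
  calc (0.368:ℝ)⁻¹ ≤ 2.7182818283 := by norm_num
    _ ≤ Real.exp 1 := Real.exp_one_gt_d9.le

lemma expm2_le : Real.exp (-2) ≤ 0.1354 := by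
  rw [Real.exp_neg, inv_le_comm₀ (Real.exp_pos _) (by norm_num)]
  calc (0.1354:ℝ)⁻¹ ≤ 7.389 := by norm_num
    _ ≤ Real.exp 2 := exp2_ge


-- standalone test versions (will merge into namespace E0aux)

lemma hE2 (t : ℝ) : HasDerivAt (fun t : ℝ => Real.exp (2*t)) (2*Real.exp (2*t)) t := by
  simpa [mul_comm] using ((hasDerivAt_id t).const_mul (2:ℝ)).exp

lemma hE4 (t : ℝ) : HasDerivAt (fun t : ℝ => Real.exp (4*t)) (4*Real.exp (4*t)) t := by
  simpa [mul_comm] using ((hasDerivAt_id t).const_mul (4:ℝ)).exp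

lemma hEh (t : ℝ) : HasDerivAt (fun t : ℝ => Real.exp (t/2)) (Real.exp (t/2)/2) t := by
  simpa [div_eq_mul_inv] using ((hasDerivAt_id t).div_const (2:ℝ)).exp

lemma hd_ot (n : ℕ+) (t : ℝ) : HasDerivAt (ot n) (o1t n t) t := by
  have h := (((hE2 t).const_mul (π*(n:ℝ)^2)).neg).exp
  refine h.congr_deriv ?_
  unfold o1t ot; simp only [Pi.neg_apply]
  ring

lemma hd_o1t (n : ℕ+) (t : ℝ) : HasDerivAt (o1t n) (o2t n t) t := by
  have h := (((hE2 t).const_mul (2*π*(n:ℝ)^2)).neg).mul (hd_ot n t)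
  refine h.congr_deriv ?_
  unfold o2t o1t ot; simp only [Pi.neg_apply]
  ring

lemma hd_tm (n : ℕ+) (t : ℝ) : HasDerivAt (tm n) (dtm n t) t := by
  have hP : HasDerivAt (fun t : ℝ => 4 * π ^ 2 * (n : ℝ) ^ 4 * Real.exp (4 * t)
      - 6 * π * (n : ℝ) ^ 2 * Real.exp (2 * t))
      (4 * π ^ 2 * (n : ℝ) ^ 4 * (4*Real.exp (4 * t))
        - 6 * π * (n : ℝ) ^ 2 * (2*Real.exp (2 * t))) t :=
    ((hE4 t).const_mul _).sub ((hE2 t).const_mul _)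
  have h := (hP.mul (hd_ot n t)).mul (hEh t)
  refine h.congr_deriv ?_
  unfold dtm ga o1t ot; simp only [Pi.mul_apply]
  have e4 : Real.exp (4*t) = Real.exp (2*t)^2 := by
    rw [← Real.exp_nat_mul]; norm_num; ring_nf
  have earg : -((n:ℝ)^2*(π*Real.exp (2*t))) = -(π*(n:ℝ)^2*Real.exp (2*t)) := by ring
  rw [earg, e4]
  ring

lemma hd_ga (n : ℕ+) (y : ℝ) : HasDerivAt (fun y => ga n y) (daf n y) y := by
  have hexp : HasDerivAt (fun y : ℝ => Real.exp (-((n:ℝ)^2*y)))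
      (-(n:ℝ)^2 * Real.exp (-((n:ℝ)^2*y))) y := by
    have := (((hasDerivAt_id y).const_mul ((n:ℝ)^2)).neg).exp
    refine this.congr_deriv ?_
    simp only [Pi.neg_apply, id_eq, mul_one]
    ring
  have hpoly : HasDerivAt (fun y : ℝ => -4*(n:ℝ)^4*y^2 + 15*(n:ℝ)^2*y - 15/2)
      (-4*(n:ℝ)^4*(2*y) + 15*(n:ℝ)^2) y := by
    have h1 : HasDerivAt (fun y : ℝ => y^2) (2*y) y := by
      simpa using hasDerivAt_pow 2 y
    have h2 := ((h1.const_mul (-4*(n:ℝ)^4)).add ((hasDerivAt_id y).const_mul (15*(n:ℝ)^2))).sub_const (15/2:ℝ)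
    simpa only [Pi.add_apply, id_eq, mul_one] using h2
  have h := ((hexp.const_mul ((n:ℝ)^2)).mul hpoly)
  refine h.congr_deriv ?_
  unfold daf
  ring


lemma polyB {v : ℝ} (hv : 0 ≤ v) :
    8*v^4+38*v^3+46*v^2+16*v ≤ 60000*Real.exp (v/2) := by
  have hE := Real.add_one_le_exp (v/8)
  set E := Real.exp (v/8) with hEdef
  have hE1 : (1:ℝ) ≤ E := by
    have : (0:ℝ) ≤ v/8 := by linarith
    linarith
  have hvE : v ≤ 8*E := by linarith
  have h4 : v^4 ≤ (8*E)^4 := pow_le_pow_left₀ hv hvE 4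
  have h3 : v^3 ≤ (8*E)^3 := pow_le_pow_left₀ hv hvE 3
  have h2 : v^2 ≤ (8*E)^2 := pow_le_pow_left₀ hv hvE 2
  have hEE : Real.exp (v/2) = E^4 := by
    rw [hEdef, ← Real.exp_nat_mul]; push_cast; ring_nf
  have hp3 : E^3 ≤ E^4 := pow_le_pow_right₀ hE1 (by norm_num)
  have hp2 : E^2 ≤ E^4 := pow_le_pow_right₀ hE1 (by norm_num)
  have hp1 : E ≤ E^4 := by
    calc E = E^1 := (pow_one E).symm
      _ ≤ E^4 := pow_le_pow_right₀ hE1 (by norm_num)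
  rw [hEE]
  nlinarith [h4, h3, h2, hvE, hp3, hp2, hp1]

lemma vfacts {n : ℕ+} {t : ℝ} (ht : -1 < t) :
    0.4*(n:ℝ)^2 ≤ π*(n:ℝ)^2*Real.exp (2*t) ∧ (3:ℝ)*Real.exp (2*t) ≤ π*(n:ℝ)^2*Real.exp (2*t) := by
  have hπ3 : (3:ℝ) ≤ π := by linarith [Real.pi_gt_three]
  have hn2 : (1:ℝ) ≤ (n:ℝ)^2 := by
    have : (1:ℝ) ≤ (n:ℝ) := by exact_mod_cast n.one_le
    nlinarith
  have hexp2t : Real.exp (-2) ≤ Real.exp (2*t) := Real.exp_le_exp.2 (by linarith)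
  have h135 := expm2_ge
  have hEpos : (0:ℝ) < Real.exp (2*t) := Real.exp_pos _
  have h1 : (3:ℝ)*Real.exp (-2) ≤ π * Real.exp (2*t) :=
    mul_le_mul hπ3 hexp2t (Real.exp_pos _).le (by linarith)
  constructor
  · calc 0.4*(n:ℝ)^2 ≤ (π*Real.exp (2*t))*(n:ℝ)^2 :=
          mul_le_mul_of_nonneg_right (by linarith) (by positivity)
      _ = π*(n:ℝ)^2*Real.exp (2*t) := by ring
  · calc (3:ℝ)*Real.exp (2*t) ≤ (π*(n:ℝ)^2)*Real.exp (2*t) :=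
          mul_le_mul_of_nonneg_right (by nlinarith) (Real.exp_pos _).le
      _ = π*(n:ℝ)^2*Real.exp (2*t) := by ring

lemma bnd_ot {n : ℕ+} {t : ℝ} (ht : -1 < t) :
    |ot n t| ≤ Real.exp (-(0.2*(n:ℝ)^2)) := by
  rw [ot, Real.abs_exp]
  apply Real.exp_le_exp.2
  have := (vfacts (n := n) ht).1
  nlinarith

lemma bnd_core {n : ℕ+} {t : ℝ} (ht : -1 < t) :
    (8*(π*(n:ℝ)^2*Real.exp (2*t))^4 + 38*(π*(n:ℝ)^2*Real.exp (2*t))^3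
      + 46*(π*(n:ℝ)^2*Real.exp (2*t))^2 + 16*(π*(n:ℝ)^2*Real.exp (2*t)))
      * Real.exp (-(π*(n:ℝ)^2*Real.exp (2*t)))
    ≤ 60000 * Real.exp (-(0.2*(n:ℝ)^2)) := by
  set v := π*(n:ℝ)^2*Real.exp (2*t) with hvdef
  have hv0 : (0:ℝ) < v := by rw [hvdef]; positivity
  have hv04 : 0.4*(n:ℝ)^2 ≤ v := (vfacts ht).1
  calc (8*v^4+38*v^3+46*v^2+16*v) * Real.exp (-v)
      ≤ (60000*Real.exp (v/2)) * Real.exp (-v) :=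
        mul_le_mul_of_nonneg_right (polyB hv0.le) (Real.exp_pos _).le
    _ = 60000 * Real.exp (-(v/2)) := by rw [mul_assoc, ← Real.exp_add]; ring_nf
    _ ≤ 60000 * Real.exp (-(0.2*(n:ℝ)^2)) := by
        have : Real.exp (-(v/2)) ≤ Real.exp (-(0.2*(n:ℝ)^2)) :=
          Real.exp_le_exp.2 (by linarith)
        linarith

lemma bnd_o1t {n : ℕ+} {t : ℝ} (ht : -1 < t) :
    |o1t n t| ≤ 60000 * Real.exp (-(0.2*(n:ℝ)^2)) := by
  have hcore := bnd_core (n := n) ht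
  set v := π*(n:ℝ)^2*Real.exp (2*t) with hvdef
  have hv0 : (0:ℝ) < v := by rw [hvdef]; positivity
  have h : |o1t n t| = 2*v * Real.exp (-v) := by
    rw [o1t, ot, abs_mul, Real.abs_exp, abs_neg, abs_of_nonneg (by positivity : (0:ℝ) ≤ 2*π*(n:ℝ)^2*Real.exp (2*t))]
    rw [hvdef]; ring
  rw [h]
  calc 2*v*Real.exp (-v) ≤ (8*v^4+38*v^3+46*v^2+16*v) * Real.exp (-v) := by
        apply mul_le_mul_of_nonneg_right _ (Real.exp_pos _).le
        nlinarith
    _ ≤ _ := hcore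

lemma bnd_o2t {n : ℕ+} {t : ℝ} (ht : -1 < t) :
    |o2t n t| ≤ 60000 * Real.exp (-(0.2*(n:ℝ)^2)) := by
  have hcore := bnd_core (n := n) ht
  set v := π*(n:ℝ)^2*Real.exp (2*t) with hvdef
  have hv0 : (0:ℝ) < v := by rw [hvdef]; positivity
  have h : |o2t n t| ≤ (4*v^2+4*v) * Real.exp (-v) := by
    rw [o2t, ot, abs_mul, Real.abs_exp]
    apply mul_le_mul_of_nonneg_right _ (Real.exp_pos _).le
    rw [abs_le]
    constructor <;> nlinarith
  calc |o2t n t| ≤ (4*v^2+4*v) * Real.exp (-v) := h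
    _ ≤ (8*v^4+38*v^3+46*v^2+16*v) * Real.exp (-v) := by
        apply mul_le_mul_of_nonneg_right _ (Real.exp_pos _).le
        nlinarith
    _ ≤ _ := hcore

lemma bnd_dtm {n : ℕ+} {t : ℝ} (ht : -1 < t) :
    |dtm n t| ≤ 60000 * Real.exp (-(0.2*(n:ℝ)^2)) := by
  have hcore := bnd_core (n := n) ht
  set v := π*(n:ℝ)^2*Real.exp (2*t) with hvdef
  have hv0 : (0:ℝ) < v := by rw [hvdef]; positivity
  have harg : ((n:ℝ)^2*(π*Real.exp (2*t))) = v := by rw [hvdef]; ring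
  have hE3 : (3:ℝ)*Real.exp (2*t) ≤ v := (vfacts ht).2
  have hEpos : (0:ℝ) < Real.exp (2*t) := Real.exp_pos _
  have hth : Real.exp (t/2) ≤ 1 + v/3 := by
    rcases le_or_gt t 0 with h0 | h0
    · have : Real.exp (t/2) ≤ 1 := Real.exp_le_one_iff.2 (by linarith)
      linarith
    · have h1 : Real.exp (t/2) ≤ Real.exp (2*t) := Real.exp_le_exp.2 (by linarith)
      have h2 : Real.exp (2*t) ≤ v/3 := by linarith
      linarith
  have hga : |ga n (π*Real.exp (2*t))| ≤ (n:ℝ)^2 * Real.exp (-v) * (4*v^2+15*v+8) := by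
    rw [ga, harg, abs_mul, abs_mul, Real.abs_exp, abs_of_nonneg (by positivity : (0:ℝ) ≤ (n:ℝ)^2)]
    apply mul_le_mul_of_nonneg_left _ (by positivity)
    have hv2 : (n:ℝ)^4*(π*Real.exp (2*t))^2 = v^2 := by rw [hvdef]; ring
    have hv1 : (n:ℝ)^2*(π*Real.exp (2*t)) = v := by rw [hvdef]; ring
    rw [abs_le]
    constructor <;> nlinarith [sq_nonneg v]
  have h2v : 2*π*Real.exp (2*t)*(n:ℝ)^2 = 2*v := by rw [hvdef]; ring
  have habs : |dtm n t| ≤ 2*v * (1+v/3) * (Real.exp (-v) * (4*v^2+15*v+8)) := by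
    rw [dtm, abs_mul,
      abs_of_nonneg (by positivity : (0:ℝ) ≤ 2*π*Real.exp (2*t)*Real.exp (t/2))]
    calc 2*π*Real.exp (2*t)*Real.exp (t/2) * |ga n (π*Real.exp (2*t))|
        ≤ (2*π*Real.exp (2*t)*(1+v/3)) * ((n:ℝ)^2 * Real.exp (-v) * (4*v^2+15*v+8)) := by
          apply mul_le_mul (mul_le_mul_of_nonneg_left hth (by positivity)) hga (abs_nonneg _) ?_
          apply mul_nonneg (by positivity) (by linarith)
      _ = 2*v * (1+v/3) * (Real.exp (-v) * (4*v^2+15*v+8)) := by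
          rw [hvdef]; ring
  calc |dtm n t| ≤ 2*v * (1+v/3) * (Real.exp (-v) * (4*v^2+15*v+8)) := habs
    _ = (2*v*(1+v/3)*(4*v^2+15*v+8)) * Real.exp (-v) := by ring
    _ ≤ (8*v^4+38*v^3+46*v^2+16*v) * Real.exp (-v) := by
        apply mul_le_mul_of_nonneg_right _ (Real.exp_pos _).le
        nlinarith
    _ ≤ _ := hcore

lemma bnd_ga {n : ℕ+} {y : ℝ} (h3 : 3 ≤ y) (h33 : y ≤ 3.3) :
    |ga n y| ≤ 142*(n:ℝ)^8*Real.exp (-(3*(n:ℝ)^2)) := by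
  have hn2 : (1:ℝ) ≤ (n:ℝ)^2 := by
    have : (1:ℝ) ≤ (n:ℝ) := by exact_mod_cast n.one_le
    nlinarith
  have hexp : Real.exp (-((n:ℝ)^2*y)) ≤ Real.exp (-(3*(n:ℝ)^2)) :=
    Real.exp_le_exp.2 (by nlinarith)
  rw [ga, abs_mul, abs_mul, Real.abs_exp, abs_of_nonneg (by positivity : (0:ℝ) ≤ (n:ℝ)^2)]
  have hn1 : (1:ℝ) ≤ (n:ℝ) := by exact_mod_cast n.one_le
  have hc1 : (n:ℝ)^2 ≤ (n:ℝ)^6 := pow_le_pow_right₀ hn1 (by norm_num)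
  have hc2 : (n:ℝ)^4 ≤ (n:ℝ)^6 := pow_le_pow_right₀ hn1 (by norm_num)
  have hc0 : (1:ℝ) ≤ (n:ℝ)^6 := one_le_pow₀ hn1
  have hy2 : y^2 ≤ 10.89 := by nlinarith
  have hA : 4*(n:ℝ)^4*y^2 ≤ 43.56*(n:ℝ)^4 := by nlinarith
  have hA0 : 0 ≤ 4*(n:ℝ)^4*y^2 := by positivity
  have hB : 15*(n:ℝ)^2*y ≤ 49.5*(n:ℝ)^2 := by nlinarith
  have hB0 : (0:ℝ) ≤ 15*(n:ℝ)^2*y := by positivity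
  have hpolyabs : |(-4*(n:ℝ)^4*y^2 + 15*(n:ℝ)^2*y - 15/2)| ≤ 142*(n:ℝ)^6 := by
    rw [abs_le]; constructor <;> nlinarith
  calc (n:ℝ)^2 * Real.exp (-((n:ℝ)^2*y)) * |(-4*(n:ℝ)^4*y^2 + 15*(n:ℝ)^2*y - 15/2)|
      ≤ (n:ℝ)^2 * Real.exp (-(3*(n:ℝ)^2)) * (142*(n:ℝ)^6) := by
        apply mul_le_mul (mul_le_mul_of_nonneg_left hexp (by positivity)) hpolyabs (abs_nonneg _) (by positivity)
    _ = 142*(n:ℝ)^8*Real.exp (-(3*(n:ℝ)^2)) := by ring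

lemma bnd_daf {n : ℕ+} {y : ℝ} (h3 : 3 ≤ y) (h33 : y ≤ 3.3) :
    |daf n y| ≤ 142*(n:ℝ)^8*Real.exp (-(3*(n:ℝ)^2)) := by
  have hn2 : (1:ℝ) ≤ (n:ℝ)^2 := by
    have : (1:ℝ) ≤ (n:ℝ) := by exact_mod_cast n.one_le
    nlinarith
  have hexp : Real.exp (-((n:ℝ)^2*y)) ≤ Real.exp (-(3*(n:ℝ)^2)) :=
    Real.exp_le_exp.2 (by nlinarith)
  rw [daf, abs_mul, abs_mul, Real.abs_exp, abs_of_nonneg (by positivity : (0:ℝ) ≤ (n:ℝ)^4)]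
  have hn1 : (1:ℝ) ≤ (n:ℝ) := by exact_mod_cast n.one_le
  have hc1 : (n:ℝ)^2 ≤ (n:ℝ)^4 := pow_le_pow_right₀ hn1 (by norm_num)
  have hc0 : (1:ℝ) ≤ (n:ℝ)^4 := one_le_pow₀ hn1
  have hy2 : y^2 ≤ 10.89 := by nlinarith
  have hA : 4*(n:ℝ)^4*y^2 ≤ 43.56*(n:ℝ)^4 := by nlinarith
  have hA0 : 0 ≤ 4*(n:ℝ)^4*y^2 := by positivity
  have hB : 23*(n:ℝ)^2*y ≤ 75.9*(n:ℝ)^2 := by nlinarith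
  have hB0 : (0:ℝ) ≤ 23*(n:ℝ)^2*y := by positivity
  have hpolyabs : |(4*(n:ℝ)^4*y^2 - 23*(n:ℝ)^2*y + 45/2)| ≤ 142*(n:ℝ)^4 := by
    rw [abs_le]; constructor <;> nlinarith
  calc (n:ℝ)^4 * Real.exp (-((n:ℝ)^2*y)) * |(4*(n:ℝ)^4*y^2 - 23*(n:ℝ)^2*y + 45/2)|
      ≤ (n:ℝ)^4 * Real.exp (-(3*(n:ℝ)^2)) * (142*(n:ℝ)^4) := by
        apply mul_le_mul (mul_le_mul_of_nonneg_left hexp (by positivity)) hpolyabs (abs_nonneg _) (by positivity)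
    _ = 142*(n:ℝ)^8*Real.exp (-(3*(n:ℝ)^2)) := by ring

/-! ### summability of the families -/

lemma summable_ot {t : ℝ} (ht : -1 < t) : Summable (fun n : ℕ+ => ot n t) := by
  apply Summable.of_norm_bounded (mastP0 (by norm_num : (0:ℝ) < 0.2))
  intro n; rw [Real.norm_eq_abs]; exact bnd_ot ht

lemma summable_o1t {t : ℝ} (ht : -1 < t) : Summable (fun n : ℕ+ => o1t n t) := by
  apply Summable.of_norm_bounded ((mastP0 (by norm_num : (0:ℝ) < 0.2)).mul_left 60000)
  intro n; rw [Real.norm_eq_abs]; exact bnd_o1t ht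

lemma summable_o2t {t : ℝ} (ht : -1 < t) : Summable (fun n : ℕ+ => o2t n t) := by
  apply Summable.of_norm_bounded ((mastP0 (by norm_num : (0:ℝ) < 0.2)).mul_left 60000)
  intro n; rw [Real.norm_eq_abs]; exact bnd_o2t ht

lemma summable_dtm {t : ℝ} (ht : -1 < t) : Summable (fun n : ℕ+ => dtm n t) := by
  apply Summable.of_norm_bounded ((mastP0 (by norm_num : (0:ℝ) < 0.2)).mul_left 60000)
  intro n; rw [Real.norm_eq_abs]; exact bnd_dtm ht

lemma summable_tm0 : Summable (fun n : ℕ+ => tm n 0) := by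
  apply Summable.of_norm_bounded (((mastP 4 (by norm_num : (0:ℝ) < 3))).mul_left 59)
  intro n
  have hn2 : (1:ℝ) ≤ (n:ℝ)^2 := by
    have : (1:ℝ) ≤ (n:ℝ) := by exact_mod_cast n.one_le
    nlinarith
  have hπ : (3:ℝ) ≤ π := by linarith [Real.pi_gt_three]
  have hπ' : π ≤ 3.15 := by linarith [Real.pi_lt_d2]
  have hexp : Real.exp (-(π*(n:ℝ)^2)) ≤ Real.exp (-(3*(n:ℝ)^2)) :=
    Real.exp_le_exp.2 (by nlinarith)
  rw [Real.norm_eq_abs, tm]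
  norm_num
  have h1 : |4*π^2*(n:ℝ)^4 - 6*π*(n:ℝ)^2| ≤ 59*(n:ℝ)^4 := by
    have h2 : (n:ℝ)^2 ≤ (n:ℝ)^4 := by nlinarith
    have hπ2 : π^2 ≤ 9.9225 := by nlinarith
    have hA : 4*π^2*(n:ℝ)^4 ≤ 39.69*(n:ℝ)^4 := by
      nlinarith [mul_le_mul_of_nonneg_right hπ2 (by positivity : (0:ℝ) ≤ (n:ℝ)^4)]
    have hB0 : (0:ℝ) ≤ 6*π*(n:ℝ)^2 := by positivity
    have hB : 6*π*(n:ℝ)^2 ≤ 18.9*(n:ℝ)^4 := by nlinarith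
    rw [abs_le]; constructor <;> nlinarith
  calc |4*π^2*(n:ℝ)^4 - 6*π*(n:ℝ)^2| * Real.exp (-(π*(n:ℝ)^2))
      ≤ (59*(n:ℝ)^4) * Real.exp (-(3*(n:ℝ)^2)) := by
        apply mul_le_mul h1 hexp (Real.exp_pos _).le (by positivity)
    _ = 59*((n:ℝ)^4 * Real.exp (-(3*(n:ℝ)^2))) := by ring

lemma summable_ga' {y : ℝ} (h3 : 3 ≤ y) : Summable (fun n : ℕ+ => ga n y) := by
  apply Summable.of_norm_bounded (((mastP 6 (by norm_num : (0:ℝ) < 3))).mul_left (4*y^2+15*y+8))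
  intro n
  have hn1 : (1:ℝ) ≤ (n:ℝ) := by exact_mod_cast n.one_le
  have hn2 : (1:ℝ) ≤ (n:ℝ)^2 := by nlinarith
  have hn4 : (1:ℝ) ≤ (n:ℝ)^4 := by nlinarith
  have hc1 : (n:ℝ)^2 ≤ (n:ℝ)^4 := by nlinarith
  have hexp : Real.exp (-((n:ℝ)^2*y)) ≤ Real.exp (-(3*(n:ℝ)^2)) :=
    Real.exp_le_exp.2 (by nlinarith)
  rw [Real.norm_eq_abs, ga, abs_mul, abs_mul, Real.abs_exp,
    abs_of_nonneg (by positivity : (0:ℝ) ≤ (n:ℝ)^2)]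
  have hpoly : |(-4*(n:ℝ)^4*y^2 + 15*(n:ℝ)^2*y - 15/2)| ≤ (4*y^2+15*y+8)*(n:ℝ)^4 := by
    have hy0 : (0:ℝ) ≤ y := by linarith
    rw [abs_le]
    constructor <;> nlinarith [mul_nonneg (mul_nonneg (by norm_num : (0:ℝ) ≤ 15) (by positivity : (0:ℝ) ≤ (n:ℝ)^2)) hy0]
  calc (n:ℝ)^2 * Real.exp (-((n:ℝ)^2*y)) * |(-4*(n:ℝ)^4*y^2 + 15*(n:ℝ)^2*y - 15/2)|
      ≤ (n:ℝ)^2 * Real.exp (-(3*(n:ℝ)^2)) * ((4*y^2+15*y+8)*(n:ℝ)^4) := by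
        apply mul_le_mul (mul_le_mul_of_nonneg_left hexp (by positivity)) hpoly (abs_nonneg _) (by positivity)
    _ = (4*y^2+15*y+8)*((n:ℝ)^6 * Real.exp (-(3*(n:ℝ)^2))) := by ring

lemma summable_daf {y : ℝ} (h3 : 3 ≤ y) (h33 : y ≤ 3.3) :
    Summable (fun n : ℕ+ => daf n y) := by
  apply Summable.of_norm_bounded (((mastP 8 (by norm_num : (0:ℝ) < 3))).mul_left 142)
  intro n
  rw [Real.norm_eq_abs]
  calc |daf n y| ≤ 142*(n:ℝ)^8*Real.exp (-(3*(n:ℝ)^2)) := bnd_daf h3 h33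
    _ = 142*((n:ℝ)^8*Real.exp (-(3*(n:ℝ)^2))) := by ring

/-! ### hasDerivAt for the sums -/

lemma hasDeriv_WW {t : ℝ} (ht : t ∈ Set.Ioi (-1:ℝ)) : HasDerivAt WW (WW1 t) t := by
  unfold WW WW1
  exact hasDerivAt_tsum_of_isPreconnected
    ((mastP0 (by norm_num : (0:ℝ) < 0.2)).mul_left 60000) isOpen_Ioi isPreconnected_Ioi
    (fun n y _ => hd_ot n y)
    (fun n y hy => by rw [Real.norm_eq_abs]; exact bnd_o1t hy)
    (show (0:ℝ) ∈ Set.Ioi (-1:ℝ) by norm_num)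
    (summable_ot (by norm_num)) ht

lemma hasDeriv_WW1 {t : ℝ} (ht : t ∈ Set.Ioi (-1:ℝ)) : HasDerivAt WW1 (WW2 t) t := by
  unfold WW1 WW2
  exact hasDerivAt_tsum_of_isPreconnected
    ((mastP0 (by norm_num : (0:ℝ) < 0.2)).mul_left 60000) isOpen_Ioi isPreconnected_Ioi
    (fun n y _ => hd_o1t n y)
    (fun n y hy => by rw [Real.norm_eq_abs]; exact bnd_o2t hy)
    (show (0:ℝ) ∈ Set.Ioi (-1:ℝ) by norm_num)
    (summable_o1t (by norm_num)) ht

lemma hasDeriv_Phi {t : ℝ} (ht : t ∈ Set.Ioi (-1:ℝ)) : HasDerivAt PhiE (Phi1E t) t := by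
  unfold PhiE Phi1E
  exact hasDerivAt_tsum_of_isPreconnected
    ((mastP0 (by norm_num : (0:ℝ) < 0.2)).mul_left 60000) isOpen_Ioi isPreconnected_Ioi
    (fun n y _ => hd_tm n y)
    (fun n y hy => by rw [Real.norm_eq_abs]; exact bnd_dtm hy)
    (show (0:ℝ) ∈ Set.Ioi (-1:ℝ) by norm_num)
    summable_tm0 ht

lemma hasDeriv_AA {y : ℝ} (hy : y ∈ Set.Ioo (3:ℝ) 3.3) : HasDerivAt AA (AA1 y) y := by
  unfold AA AA1
  exact hasDerivAt_tsum_of_isPreconnected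
    ((mastP 8 (by norm_num : (0:ℝ) < 3)).mul_left 142) isOpen_Ioo isPreconnected_Ioo
    (fun n z _ => hd_ga n z)
    (fun n z hz => by
      rw [Real.norm_eq_abs]
      calc |daf n z| ≤ 142*(n:ℝ)^8*Real.exp (-(3*(n:ℝ)^2)) := bnd_daf hz.1.le hz.2.le
        _ = 142*((n:ℝ)^8*Real.exp (-(3*(n:ℝ)^2))) := by ring)
    (show (3.15:ℝ) ∈ Set.Ioo (3:ℝ) 3.3 by norm_num)
    (summable_ga' (by norm_num)) hy

/-! ### functional equation -/

lemma int_even_tsum {c : ℝ} (hc : 0 < c) :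
    ∑' n : ℤ, Real.exp (-(c*(n:ℝ)^2)) = 1 + 2*∑' n : ℕ+, Real.exp (-(c*(n:ℝ)^2)) := by
  have hsN : Summable (fun n : ℕ => Real.exp (-(c*(n:ℝ)^2))) := by
    simpa using mastN 0 hc
  set F : ℤ → ℝ := fun n => Real.exp (-(c*(n:ℝ)^2)) with hF
  have h2' : Summable (fun n : ℕ => Real.exp (-(c*((n:ℝ)+1)^2))) := by
    apply Summable.of_nonneg_of_le (fun n => (Real.exp_pos _).le) _ hsN
    intro n
    apply Real.exp_le_exp.2
    have h0 : (0:ℝ) ≤ (n:ℝ) := n.cast_nonneg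
    nlinarith
  have hcast1 : (fun n : ℕ => F n) = fun n : ℕ => Real.exp (-(c*(n:ℝ)^2)) := by
    funext n; simp only [hF]; push_cast; ring_nf
  have hcast2 : (fun n : ℕ => F (-(n+1))) = fun n : ℕ => Real.exp (-(c*((n:ℝ)+1)^2)) := by
    funext n; simp only [hF]; push_cast; rw [neg_sq]
  have h1 : Summable (fun n : ℕ => F n) := by rw [hcast1]; exact hsN
  have h2 : Summable (fun n : ℕ => F (-(n+1))) := by rw [hcast2]; exact h2'
  have hpn : ∑' n : ℕ+, Real.exp (-(c*(n:ℝ)^2))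
      = ∑' n : ℕ, Real.exp (-(c*((n:ℝ)+1)^2)) := by
    rw [← Equiv.pnatEquivNat.symm.tsum_eq (fun n : ℕ+ => Real.exp (-(c*(n:ℝ)^2)))]
    apply tsum_congr
    intro k
    have hk : ((Equiv.pnatEquivNat.symm k : ℕ+) : ℝ) = (k:ℝ) + 1 := by
      have : (Equiv.pnatEquivNat.symm k : ℕ+) = k.succPNat := rfl
      rw [this]
      have : ((k.succPNat : ℕ+) : ℕ) = k + 1 := Nat.succPNat_coe k
      rw [show ((k.succPNat : ℕ+) : ℝ) = (((k.succPNat : ℕ+) : ℕ) : ℝ) from rfl, this]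
      push_cast; ring
    rw [hk]
  calc ∑' n:ℤ, F n = (∑' n:ℕ, F n) + ∑' n:ℕ, F (-(n+1)) :=
        tsum_of_nat_of_neg_add_one h1 h2
    _ = (F ((0:ℕ)) + ∑' n:ℕ, F ((n+1:ℕ))) + ∑' n:ℕ, F (-(n+1)) := by
        rw [h1.tsum_eq_zero_add]
    _ = (1 + ∑' n:ℕ, Real.exp (-(c*((n:ℝ)+1)^2))) + ∑' n:ℕ, Real.exp (-(c*((n:ℝ)+1)^2)) := by
        have e1 : (∑' n:ℕ, F ((n+1:ℕ))) = ∑' n:ℕ, Real.exp (-(c*((n:ℝ)+1)^2)) :=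
          tsum_congr (fun n => by simp only [hF]; push_cast; ring_nf)
        have e2 : (∑' n:ℕ, F (-(n+1))) = ∑' n:ℕ, Real.exp (-(c*((n:ℝ)+1)^2)) := by
          rw [hcast2]
        rw [show F ((0:ℕ)) = 1 by simp [hF], e1, e2]
    _ = 1 + 2*∑' n:ℕ+, Real.exp (-(c*(n:ℝ)^2)) := by rw [hpn]; ring

lemma FE (t : ℝ) : 1 + 2*WW t = Real.exp (-t) * (1 + 2*WW (-t)) := by
  have ha : (0:ℝ) < Real.exp (2*t) := Real.exp_pos _
  have key := Real.tsum_exp_neg_mul_int_sq ha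
  have hL : (∑' n : ℤ, Real.exp (-π * Real.exp (2*t) * (n:ℝ)^2))
      = ∑' n : ℤ, Real.exp (-((π*Real.exp (2*t))*(n:ℝ)^2)) :=
    tsum_congr fun n => by congr 1; ring
  have hR : (∑' n : ℤ, Real.exp (-π / Real.exp (2*t) * (n:ℝ)^2))
      = ∑' n : ℤ, Real.exp (-((π*Real.exp (-(2*t)))*(n:ℝ)^2)) :=
    tsum_congr fun n => by congr 1; rw [Real.exp_neg]; ring
  have hrpow : (Real.exp (2*t)) ^ ((1:ℝ)/2) = Real.exp t := by
    rw [Real.rpow_def_of_pos ha, Real.log_exp]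
    ring_nf
  have hWL : ∑' n : ℕ+, Real.exp (-((π*Real.exp (2*t))*(n:ℝ)^2)) = WW t := by
    unfold WW
    exact tsum_congr fun n => by unfold ot; ring_nf
  have hWR : ∑' n : ℕ+, Real.exp (-((π*Real.exp (-(2*t)))*(n:ℝ)^2)) = WW (-t) := by
    unfold WW
    exact tsum_congr fun n => by
      unfold ot
      congr 1
      rw [show (2:ℝ)*(-t) = -(2*t) by ring]
      ring
  have h1 := int_even_tsum (show (0:ℝ) < π*Real.exp (2*t) by positivity)
  have h2 := int_even_tsum (show (0:ℝ) < π*Real.exp (-(2*t)) by positivity)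
  rw [hL, hR, h1, h2, hrpow, hWL, hWR] at key
  rw [key, Real.exp_neg, one_div]

lemma LamEven (t : ℝ) : Lam t = Lam (-t) := by
  unfold Lam
  rw [FE t]
  rw [show Real.exp (t/2) * (Real.exp (-t) * (1 + 2*WW (-t)))
      = (Real.exp (t/2) * Real.exp (-t)) * (1 + 2*WW (-t)) by ring,
    ← Real.exp_add]
  congr 2
  ring

lemma hasDeriv_Lam {t : ℝ} (ht : t ∈ Set.Ioi (-1:ℝ)) : HasDerivAt Lam (Lam1 t) t := by
  have h := (hEh t).mul (((hasDeriv_WW ht).const_mul 2).const_add 1)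
  refine h.congr_deriv ?_
  unfold Lam1
  ring

lemma hasDeriv_Lam1 {t : ℝ} (ht : t ∈ Set.Ioi (-1:ℝ)) : HasDerivAt Lam1 (Lam2 t) t := by
  have hin : HasDerivAt (fun t => (1 + 2*WW t)/2 + 2*WW1 t) ((2*WW1 t)/2 + 2*WW2 t) t :=
    ((((hasDeriv_WW ht).const_mul 2).const_add 1).div_const 2).add ((hasDeriv_WW1 ht).const_mul 2)
  have h := (hEh t).mul hin
  refine h.congr_deriv ?_
  unfold Lam2
  ring

lemma neg_mem_Ioi {t : ℝ} (ht : t ∈ Set.Ioo (-1:ℝ) 1) : -t ∈ Set.Ioi (-1:ℝ) := by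
  have := ht.2; simp only [Set.mem_Ioi]; linarith

lemma Lam1_odd {t : ℝ} (ht : t ∈ Set.Ioo (-1:ℝ) 1) : Lam1 t = -Lam1 (-t) := by
  have h1 := hasDeriv_Lam (show t ∈ Set.Ioi (-1:ℝ) from ht.1)
  have h2 : HasDerivAt (fun s => Lam (-s)) (Lam1 (-t) * (-1)) t :=
    (hasDeriv_Lam (neg_mem_Ioi ht)).comp t (hasDerivAt_neg t)
  have h3 : (fun s => Lam (-s)) = Lam := funext fun s => (LamEven s).symm
  rw [h3] at h2
  have := h1.unique h2
  linarith

lemma Lam2_even {t : ℝ} (ht : t ∈ Set.Ioo (-1:ℝ) 1) : Lam2 t = Lam2 (-t) := by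
  have h1 := hasDeriv_Lam1 (show t ∈ Set.Ioi (-1:ℝ) from ht.1)
  have h2 : HasDerivAt (fun s => -Lam1 (-s)) (-(Lam2 (-t) * (-1))) t :=
    ((hasDeriv_Lam1 (neg_mem_Ioi ht)).comp t (hasDerivAt_neg t)).neg
  have hev : Lam1 =ᶠ[nhds t] (fun s => -Lam1 (-s)) := by
    filter_upwards [Ioo_mem_nhds ht.1 ht.2] with s hs using Lam1_odd hs
  have h2' : HasDerivAt Lam1 (-(Lam2 (-t) * (-1))) t := h2.congr_of_eventuallyEq hev
  have := h1.unique h2'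
  linarith

lemma tm_eq (n : ℕ+) (t : ℝ) : tm n t = Real.exp (t/2) * (o1t n t + o2t n t) := by
  unfold tm o1t o2t ot
  have e4 : Real.exp (4*t) = Real.exp (2*t)^2 := by
    rw [← Real.exp_nat_mul]; push_cast; ring_nf
  rw [e4]
  ring

lemma phi_eq {t : ℝ} (ht : -1 < t) : PhiE t = Real.exp (t/2) * (WW1 t + WW2 t) := by
  unfold PhiE WW1 WW2
  calc ∑' n : ℕ+, tm n t = ∑' n : ℕ+, Real.exp (t/2) * (o1t n t + o2t n t) :=
        tsum_congr fun n => tm_eq n t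
    _ = Real.exp (t/2) * ∑' n : ℕ+, (o1t n t + o2t n t) := tsum_mul_left
    _ = Real.exp (t/2) * ((∑' n : ℕ+, o1t n t) + ∑' n : ℕ+, o2t n t) := by
        rw [Summable.tsum_add (summable_o1t ht) (summable_o2t ht)]

lemma phi_eq' {t : ℝ} (ht : -1 < t) : PhiE t = (Lam2 t - Lam t/4)/2 := by
  rw [phi_eq ht]
  unfold Lam2 Lam
  ring

lemma phi_even {t : ℝ} (ht : t ∈ Set.Ioo (-1:ℝ) 1) : PhiE t = PhiE (-t) := by
  rw [phi_eq' ht.1, phi_eq' (show (-1:ℝ) < -t by have := ht.2; linarith),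
    Lam2_even ht, LamEven t]

lemma Phi1E_zero : Phi1E 0 = 0 := by
  have h0 : (0:ℝ) ∈ Set.Ioi (-1:ℝ) := by norm_num
  have h1 := hasDeriv_Phi h0
  have h2 : HasDerivAt (fun s => PhiE (-s)) (Phi1E (-0) * (-1)) 0 :=
    (hasDeriv_Phi (by norm_num : (-0:ℝ) ∈ Set.Ioi (-1:ℝ))).comp 0 (hasDerivAt_neg 0)
  have hev : PhiE =ᶠ[nhds 0] (fun s => PhiE (-s)) := by
    filter_upwards [Ioo_mem_nhds (by norm_num : (-1:ℝ) < 0) (by norm_num : (0:ℝ) < 1)] with s hs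
      using phi_even hs
  have h2' := h2.congr_of_eventuallyEq hev
  have := h1.unique h2'
  rw [neg_zero] at this
  linarith

lemma AA_pi : AA π = 0 := by
  have h : Phi1E 0 = 2*π*(AA π) := by
    unfold Phi1E AA
    have hterm : ∀ n : ℕ+, dtm n 0 = 2*π*(ga n π) := by
      intro n
      unfold dtm
      norm_num
    calc ∑' n : ℕ+, dtm n 0 = ∑' n : ℕ+, 2*π*(ga n π) := tsum_congr hterm
      _ = 2*π*∑' n : ℕ+, ga n π := tsum_mul_left
  have h0 := Phi1E_zero
  rw [h] at h0
  have hπ : (0:ℝ) < 2*π := by positivity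
  exact (mul_eq_zero.mp h0).resolve_left (by positivity)

/-! ### negativity of AA1 on [π, 3.2] -/

lemma expm1_ge : (0.3678:ℝ) ≤ Real.exp (-1) := by
  rw [Real.exp_neg, le_inv_comm₀ (by norm_num) (Real.exp_pos _)]
  calc Real.exp 1 ≤ 2.7182818286 := Real.exp_one_lt_d9.le
    _ ≤ 0.3678⁻¹ := by norm_num

lemma exp_neg_le_inv {a b : ℝ} (hb : 0 < b) (h : b ≤ Real.exp a) : Real.exp (-a) ≤ b⁻¹ := by
  rw [Real.exp_neg]
  exact inv_anti₀ hb h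

lemma bnd_daf2 {n : ℕ+} {y : ℝ} (h3 : 3.14 ≤ y) (h33 : y ≤ 3.3) :
    |daf n y| ≤ 142*(n:ℝ)^8*Real.exp (-(3.14*(n:ℝ)^2)) := by
  have hn2 : (1:ℝ) ≤ (n:ℝ)^2 := by
    have : (1:ℝ) ≤ (n:ℝ) := by exact_mod_cast n.one_le
    nlinarith
  have hexp : Real.exp (-((n:ℝ)^2*y)) ≤ Real.exp (-(3.14*(n:ℝ)^2)) :=
    Real.exp_le_exp.2 (by nlinarith)
  rw [daf, abs_mul, abs_mul, Real.abs_exp, abs_of_nonneg (by positivity : (0:ℝ) ≤ (n:ℝ)^4)]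
  have hn1 : (1:ℝ) ≤ (n:ℝ) := by exact_mod_cast n.one_le
  have hc1 : (n:ℝ)^2 ≤ (n:ℝ)^4 := pow_le_pow_right₀ hn1 (by norm_num)
  have hc0 : (1:ℝ) ≤ (n:ℝ)^4 := one_le_pow₀ hn1
  have hy2 : y^2 ≤ 10.89 := by nlinarith
  have hA : 4*(n:ℝ)^4*y^2 ≤ 43.56*(n:ℝ)^4 := by nlinarith
  have hA0 : 0 ≤ 4*(n:ℝ)^4*y^2 := by positivity
  have hB : 23*(n:ℝ)^2*y ≤ 75.9*(n:ℝ)^2 := by nlinarith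
  have hB0 : (0:ℝ) ≤ 23*(n:ℝ)^2*y := by positivity
  have hpolyabs : |(4*(n:ℝ)^4*y^2 - 23*(n:ℝ)^2*y + 45/2)| ≤ 142*(n:ℝ)^4 := by
    rw [abs_le]; constructor <;> nlinarith
  calc (n:ℝ)^4 * Real.exp (-((n:ℝ)^2*y)) * |(4*(n:ℝ)^4*y^2 - 23*(n:ℝ)^2*y + 45/2)|
      ≤ (n:ℝ)^4 * Real.exp (-(3.14*(n:ℝ)^2)) * (142*(n:ℝ)^4) := by
        apply mul_le_mul (mul_le_mul_of_nonneg_left hexp (by positivity)) hpolyabs (abs_nonneg _) (by positivity)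
    _ = 142*(n:ℝ)^8*Real.exp (-(3.14*(n:ℝ)^2)) := by ring

lemma daf_tail {n : ℕ+} (hn : n ≠ 1) {y : ℝ} (hy1 : 3.14 ≤ y) (hy2 : y ≤ 3.2) :
    daf n y ≤ 1.2*Real.exp (-(n:ℝ)) := by
  have habs : daf n y ≤ 142*(n:ℝ)^8*Real.exp (-(3.14*(n:ℝ)^2)) :=
    (le_abs_self _).trans (bnd_daf2 hy1 (by linarith))
  have hm : 2 ≤ (n:ℕ) := by
    have h1 : 1 ≤ (n:ℕ) := n.one_le
    rcases Nat.lt_or_ge (n:ℕ) 2 with h | h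
    · exfalso; apply hn; have : (n:ℕ) = 1 := by omega
      exact PNat.coe_injective this
    · exact h
  refine habs.trans ?_
  rcases eq_or_lt_of_le hm with h2 | h2
  · -- n = 2
    have hx : ((n:ℕ):ℝ) = 2 := by exact_mod_cast h2.symm
    rw [show ((n:ℝ)) = ((n:ℕ):ℝ) from rfl, hx,
      show -(3.14*(2:ℝ)^2) = -12.56 by norm_num]
    have hsplit : Real.exp (-(12.56:ℝ)) = Real.exp (-2) * Real.exp (-10.56) := by
      rw [← Real.exp_add]; norm_num
    have h1 : Real.exp (-(10.56:ℝ)) ≤ Real.exp (-(10.5:ℝ)) := Real.exp_le_exp.2 (by norm_num)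
    have h2' : Real.exp (-(10.5:ℝ)) ≤ 33000⁻¹ := exp_neg_le_inv (by norm_num) exp105_ge
    have := Real.exp_pos (-2:ℝ)
    calc (142:ℝ)*2^8 * Real.exp (-12.56) = 36352 * (Real.exp (-2) * Real.exp (-10.56)) := by
          rw [hsplit]; norm_num
      _ ≤ 36352 * (Real.exp (-2) * 33000⁻¹) := by
          have := (h1.trans h2')
          nlinarith
      _ ≤ 1.2 * Real.exp (-2) := by nlinarith
  rcases eq_or_lt_of_le (show 3 ≤ (n:ℕ) by omega) with h3 | h3
  · -- n = 3
    have hx : ((n:ℕ):ℝ) = 3 := by exact_mod_cast h3.symm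
    rw [show ((n:ℝ)) = ((n:ℕ):ℝ) from rfl, hx,
      show -(3.14*(3:ℝ)^2) = -28.26 by norm_num]
    have hsplit : Real.exp (-(28.26:ℝ)) = Real.exp (-3) * Real.exp (-25.26) := by
      rw [← Real.exp_add]; norm_num
    have h1 : Real.exp (-(25.26:ℝ)) ≤ Real.exp (-(25:ℝ)) := Real.exp_le_exp.2 (by norm_num)
    have h2' : Real.exp (-(25:ℝ)) ≤ 776385⁻¹ := exp_neg_le_inv (by norm_num) exp25_ge
    have := Real.exp_pos (-3:ℝ)
    calc (142:ℝ)*3^8 * Real.exp (-28.26) = 931662 * (Real.exp (-3) * Real.exp (-25.26)) := by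
          rw [hsplit]; norm_num
      _ ≤ 931662 * (Real.exp (-3) * 776385⁻¹) := by
          have := (h1.trans h2')
          nlinarith
      _ ≤ 1.2 * Real.exp (-3) := by nlinarith
  · -- n ≥ 4
    have hx : (4:ℝ) ≤ (n:ℝ) := by exact_mod_cast h3
    set x : ℝ := (n:ℝ) with hxdef
    have hx0 : (0:ℝ) < x := by linarith
    have hpow : x^8 ≤ Real.exp (8*(x-1)) := by
      calc x^8 = Real.exp (Real.log (x^8)) := by rw [Real.exp_log (by positivity)]
        _ ≤ Real.exp (8*(x-1)) := by
            apply Real.exp_le_exp.2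
            rw [Real.log_pow]
            have := Real.log_le_sub_one_of_pos hx0
            push_cast
            nlinarith
    calc 142*x^8*Real.exp (-(3.14*x^2))
        ≤ 142*Real.exp (8*(x-1))*Real.exp (-(3.14*x^2)) := by
          apply mul_le_mul_of_nonneg_right _ (Real.exp_pos _).le
          nlinarith
      _ = 142*Real.exp (8*(x-1) - 3.14*x^2) := by rw [mul_assoc, ← Real.exp_add]; ring_nf
      _ ≤ 142*Real.exp (-x - 5) := by
          have : 8*(x-1) - 3.14*x^2 ≤ -x - 5 := by nlinarith
          have h := Real.exp_le_exp.2 this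
          nlinarith [Real.exp_pos (8*(x-1) - 3.14*x^2)]
      _ = (142*Real.exp (-5))*Real.exp (-x) := by rw [mul_assoc, ← Real.exp_add]; ring_nf
      _ ≤ 1.2 * Real.exp (-x) := by
          apply mul_le_mul_of_nonneg_right _ (Real.exp_pos _).le
          have h5 : (118.4:ℝ) ≤ Real.exp 5 := exp5_ge
          have h5' : Real.exp (-5:ℝ) ≤ 118.4⁻¹ := exp_neg_le_inv (by norm_num) h5
          nlinarith

lemma summable_expn : Summable (fun n : ℕ+ => Real.exp (-(n:ℝ))) := by
  have hg : Summable (fun n : ℕ => (Real.exp (-1))^n) :=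
    summable_geometric_of_lt_one (Real.exp_pos _).le
      (by rw [Real.exp_lt_one_iff]; norm_num)
  apply (hg.comp_injective PNat.coe_injective).congr
  intro n
  simp only [Function.comp]
  rw [← Real.exp_nat_mul]
  congr 1
  push_cast
  ring

lemma tsum_geo_pnat : ∑' n : ℕ+, Real.exp (-(n:ℝ)) = Real.exp (-1) * (1 - Real.exp (-1))⁻¹ := by
  rw [← Equiv.pnatEquivNat.symm.tsum_eq (fun n : ℕ+ => Real.exp (-(n:ℝ)))]
  have hr0 : (0:ℝ) ≤ Real.exp (-1) := (Real.exp_pos _).le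
  have hr1 : Real.exp (-1) < 1 := by rw [Real.exp_lt_one_iff]; norm_num
  calc ∑' k : ℕ, Real.exp (-(((Equiv.pnatEquivNat.symm k : ℕ+)):ℝ))
      = ∑' k : ℕ, Real.exp (-1) * (Real.exp (-1))^k := by
        apply tsum_congr
        intro k
        have hk : (((Equiv.pnatEquivNat.symm k : ℕ+)):ℝ) = (k:ℝ) + 1 := by
          rw [show ((Equiv.pnatEquivNat.symm k : ℕ+) : ℝ) = (((Equiv.pnatEquivNat.symm k : ℕ+) : ℕ) : ℝ) from rfl,
            show ((Equiv.pnatEquivNat.symm k : ℕ+) : ℕ) = k + 1 from Nat.succPNat_coe k]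
          push_cast; ring
        rw [hk, ← Real.exp_nat_mul, ← Real.exp_add]
        congr 1
        push_cast; ring
    _ = Real.exp (-1) * ∑' k : ℕ, (Real.exp (-1))^k := tsum_mul_left
    _ = Real.exp (-1) * (1 - Real.exp (-1))⁻¹ := by rw [tsum_geometric_of_lt_one hr0 hr1]

lemma AA1_neg {y : ℝ} (hy1 : π ≤ y) (hy2 : y ≤ 3.2) : AA1 y < 0 := by
  have hy314 : 3.14 ≤ y := le_trans (by linarith [Real.pi_gt_d2]) hy1
  have hsum : Summable (fun n : ℕ+ => daf n y) := summable_daf (by linarith) (by linarith)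
  have hsplit := hsum.tsum_eq_add_tsum_ite 1
  have hone : daf 1 y ≤ -0.41 := by
    have h1 : ((1:ℕ+):ℝ) = 1 := by norm_num
    unfold daf
    rw [h1]
    norm_num
    have hq : 4*y^2 - 23*y + 45/2 ≤ -10.1 := by
      nlinarith [mul_nonneg (by linarith : (0:ℝ) ≤ y - 3.14) (by linarith : (0:ℝ) ≤ 3.2 - y)]
    have hE : (0.0406:ℝ) ≤ Real.exp (-y) :=
      le_trans expm32_ge (Real.exp_le_exp.2 (by linarith))
    have step1 : Real.exp (-y) * (4*y^2 - 23*y + 45/2) ≤ Real.exp (-y) * (-10.1) :=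
      mul_le_mul_of_nonneg_left hq (Real.exp_pos _).le
    nlinarith
  have htail : (∑' n : ℕ+, if n = 1 then 0 else daf n y) ≤ 0.26 := by
    have hsum_ite : Summable (fun n : ℕ+ => if n = 1 then 0 else daf n y) := by
      apply Summable.of_norm_bounded hsum.abs
      intro n
      rw [Real.norm_eq_abs]
      split_ifs with h
      · simp [abs_nonneg]
      · exact le_rfl
    have hgsum : Summable (fun n : ℕ+ => 1.2*Real.exp (-(n:ℝ))) := summable_expn.mul_left 1.2
    have hsum_g : Summable (fun n : ℕ+ => if n = 1 then 0 else 1.2*Real.exp (-(n:ℝ))) := by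
      apply Summable.of_norm_bounded hgsum
      intro n
      rw [Real.norm_eq_abs]
      split_ifs with h
      · simp; positivity
      · rw [abs_of_nonneg (by positivity)]
    have hle : ∀ n : ℕ+, (if n = 1 then 0 else daf n y) ≤ (if n = 1 then 0 else 1.2*Real.exp (-(n:ℝ))) := by
      intro n
      split_ifs with h
      · exact le_rfl
      · exact daf_tail h hy314 hy2
    have h1 := Summable.tsum_le_tsum hle hsum_ite hsum_g
    have hgsplit := hgsum.tsum_eq_add_tsum_ite 1
    have hgeo : (∑' n : ℕ+, 1.2*Real.exp (-(n:ℝ))) = 1.2*(Real.exp (-1) * (1 - Real.exp (-1))⁻¹) := by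
      rw [tsum_mul_left, tsum_geo_pnat]
    have hg1 : ((1:ℕ+):ℝ) = 1 := by norm_num
    have hnum : (∑' n : ℕ+, if n = 1 then 0 else 1.2*Real.exp (-(n:ℝ))) ≤ 0.26 := by
      have heq : (∑' n : ℕ+, if n = 1 then 0 else 1.2*Real.exp (-(n:ℝ)))
          = 1.2*(Real.exp (-1) * (1 - Real.exp (-1))⁻¹) - 1.2*Real.exp (-1) := by
        rw [← hgeo]
        rw [hgsplit, hg1]
        ring
      rw [heq]
      have hr : Real.exp (-1:ℝ) ≤ 0.368 := expm1_le
      have hrge : (0.3678:ℝ) ≤ Real.exp (-1) := expm1_ge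
      have h1r : (0.632:ℝ) ≤ 1 - Real.exp (-1) := by linarith
      have hinv : (1 - Real.exp (-1))⁻¹ ≤ (0.632:ℝ)⁻¹ :=
        inv_anti₀ (by norm_num) h1r
      have hs0 : (0:ℝ) < (1 - Real.exp (-1))⁻¹ := by
        apply inv_pos.2; linarith
      have hA : Real.exp (-1) * (1 - Real.exp (-1))⁻¹ ≤ 0.368 * 0.632⁻¹ :=
        mul_le_mul hr hinv hs0.le (by norm_num)
      have hA' : Real.exp (-1) * (1 - Real.exp (-1))⁻¹ ≤ 0.5823 := by
        apply hA.trans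
        norm_num
      linarith
    exact h1.trans hnum
  unfold AA1
  rw [hsplit]
  linarith

lemma AA_strictanti : StrictAntiOn AA (Set.Icc π 3.2) := by
  apply strictAntiOn_of_deriv_neg (convex_Icc _ _)
  · intro y hy
    have hmem : y ∈ Set.Ioo (3:ℝ) 3.3 := by
      constructor
      · linarith [Real.pi_gt_three, hy.1]
      · linarith [hy.2]
    exact (hasDeriv_AA hmem).continuousAt.continuousWithinAt
  · intro y hy
    rw [interior_Icc] at hy
    have hmem : y ∈ Set.Ioo (3:ℝ) 3.3 := by
      constructor
      · linarith [Real.pi_gt_three, hy.1]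
      · linarith [hy.2]
    rw [(hasDeriv_AA hmem).deriv]
    exact AA1_neg hy.1.le hy.2.le

lemma ga_neg {n : ℕ+} {y : ℝ} (hy : 3.2 ≤ y) : ga n y < 0 := by
  have hn2 : (1:ℝ) ≤ (n:ℝ)^2 := by
    have : (1:ℝ) ≤ (n:ℝ) := by exact_mod_cast n.one_le
    nlinarith
  have hz : (3.2:ℝ) ≤ (n:ℝ)^2*y := by nlinarith
  have hpoly : -4*(n:ℝ)^4*y^2 + 15*(n:ℝ)^2*y - 15/2 < 0 := by
    nlinarith [sq_nonneg ((n:ℝ)^2*y - 3.2)]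
  unfold ga
  exact mul_neg_of_pos_of_neg (by positivity) hpoly

lemma AA_neg {y : ℝ} (hy : π < y) : AA y < 0 := by
  rcases le_or_gt y 3.2 with h | h
  · have hmem1 : π ∈ Set.Icc π (3.2:ℝ) := by
      constructor
      · exact le_rfl
      · linarith [Real.pi_lt_d2]
    have hmem2 : y ∈ Set.Icc π (3.2:ℝ) := ⟨hy.le, h⟩
    have := AA_strictanti hmem1 hmem2 hy
    rw [AA_pi] at this
    exact this
  · have hsum := summable_ga' (show (3:ℝ) ≤ y by linarith)
    have hpos := Summable.tsum_pos hsum.neg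
      (fun n => (neg_pos.2 (ga_neg (n := n) h.le)).le) 1 (neg_pos.2 (ga_neg h.le))
    rw [tsum_neg] at hpos
    unfold AA
    linarith

end E0aux

open E0aux in
/-- `E₀(t) = Σ_{n=1}^∞ (4π²n⁴e^{4t} − 6πn²e^{2t}) e^{−πn²e^{2t}} e^{t/2}`
is strictly decreasing on `(0, ∞)`. -/
theorem E0_strictAntiOn :
    StrictAntiOn (fun t : ℝ =>
      ∑' n : ℕ+, (4 * π ^ 2 * (n : ℝ) ^ 4 * Real.exp (4 * t)
          - 6 * π * (n : ℝ) ^ 2 * Real.exp (2 * t))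
        * Real.exp (-(π * (n : ℝ) ^ 2 * Real.exp (2 * t))) * Real.exp (t / 2))
      (Set.Ioi 0) := by
  have hfun : (fun t : ℝ =>
      ∑' n : ℕ+, (4 * π ^ 2 * (n : ℝ) ^ 4 * Real.exp (4 * t)
          - 6 * π * (n : ℝ) ^ 2 * Real.exp (2 * t))
        * Real.exp (-(π * (n : ℝ) ^ 2 * Real.exp (2 * t))) * Real.exp (t / 2)) = PhiE := rfl
  rw [hfun]
  apply strictAntiOn_of_deriv_neg (convex_Ioi 0)
  · intro t ht
    have ht' : t ∈ Set.Ioi (-1:ℝ) := by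
      simp only [Set.mem_Ioi] at ht ⊢; linarith
    exact (hasDeriv_Phi ht').continuousAt.continuousWithinAt
  · intro t ht
    rw [interior_Ioi] at ht
    simp only [Set.mem_Ioi] at ht
    have ht' : t ∈ Set.Ioi (-1:ℝ) := by
      simp only [Set.mem_Ioi]; linarith
    rw [(hasDeriv_Phi ht').deriv]
    have hP : Phi1E t = 2*π*Real.exp (2*t)*Real.exp (t/2) * AA (π*Real.exp (2*t)) := by
      unfold Phi1E AA dtm
      exact tsum_mul_left
    rw [hP]
    apply mul_neg_of_pos_of_neg (by positivity)
    apply AA_neg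
    have h1 : (1:ℝ) < Real.exp (2*t) := by
      have := Real.exp_lt_exp.2 (show (0:ℝ) < 2*t by linarith)
      rwa [Real.exp_zero] at this
    nlinarith [Real.pi_pos]
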